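/- Every walk-nonrepetitive colouring of a graph is nonrepetitive on non-boring lazy walks: if a lazy walk (v_1,...,v_{2t}) is repetitively coloured, then v_i = v_{t+i} for all i ∈ {1,...,t}. -/

import Mathlib

/-- `v 0, …, v (n-1)` is a walk in `G`. -/
def IsWalkSeq {V : Type*} (G : SimpleGraph V) (n : ℕ) (v : ℕ → V) : Prop :=
  ∀ i, i + 1 < n → G.Adj (v i) (v (i + 1))

/-- `v 0, …, v (n-1)` is a lazy walk in `G`: consecutive vertices touch
(are equal or adjacent). -/
def IsLazyWalkSeq {V : Type*} (G : SimpleGraph V) (n : ℕ) (v : ℕ → V) : Prop :=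
  ∀ i, i + 1 < n → v i = v (i + 1) ∨ G.Adj (v i) (v (i + 1))

/-- A colouring is walk-nonrepetitive if every repetitively coloured walk is boring. -/
def WalkNonrepetitive {V C : Type*} (G : SimpleGraph V) (φ : V → C) : Prop :=
  ∀ t : ℕ, 0 < t → ∀ v : ℕ → V, IsWalkSeq G (2 * t) v →
    (∀ i < t, φ (v i) = φ (v (t + i))) → ∀ i < t, v i = v (t + i)

/-- Every walk-nonrepetitive colouring is nonrepetitive on non-boring lazy walks:
every repetitively coloured lazy walk is boring. -/
theorem walkNonrepetitive_lazy {V C : Type*} (G : SimpleGraph V) (φ : V → C)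
    (h : WalkNonrepetitive G φ) :
    ∀ t : ℕ, 0 < t → ∀ v : ℕ → V, IsLazyWalkSeq G (2 * t) v →
      (∀ i < t, φ (v i) = φ (v (t + i))) → ∀ i < t, v i = v (t + i) := by
  -- properness of φ
  have hproper : ∀ a b : V, G.Adj a b → φ a = φ b → False := by
    intro a b hab hcab
    have h2 : IsWalkSeq G (2 * 1) (fun j => if j = 0 then a else b) := by
      intro i hi
      have : i = 0 := by omega
      subst this
      simpa using hab
    have h3 := h 1 one_pos _ h2 (by
      intro i hi
      have : i = 0 := by omega
      subst this
      simpa using hcab) 0 one_pos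
    norm_num at h3
    exact G.loopless.irrefl a (h3 ▸ hab)
  intro t
  induction t using Nat.strong_induction_on with
  | _ t IH =>
  intro ht v hlazy hcol
  by_cases hstay : ∃ i, i + 1 < t ∧ v i = v (i + 1)
  · -- Case B: a stay inside the first half
    obtain ⟨i, hit, hvi⟩ := hstay
    have hvti : v (t + i) = v (t + i + 1) := by
      rcases hlazy (t + i) (by omega) with heq | hadj
      · exact heq
      · exfalso
        apply hproper _ _ hadj
        calc φ (v (t + i)) = φ (v i) := (hcol i (by omega)).symm
          _ = φ (v (i + 1)) := by rw [hvi]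
          _ = φ (v (t + (i + 1))) := hcol (i + 1) (by omega)
          _ = φ (v (t + i + 1)) := by rw [show t + (i + 1) = t + i + 1 by omega]
    set t' := t - 1 with ht'
    have ht'pos : 0 < t' := by omega
    set f : ℕ → ℕ := fun j => if j < i then j else if j < t' + i then j + 1 else j + 2 with hf
    have hflt : ∀ j, j < t' → f j < t := by
      intro j hj; simp only [hf]; split_ifs <;> omega
    have hft : ∀ j, j < t' → f (t' + j) = t + f j := by
      intro j hj; simp only [hf]; split_ifs <;> omega
    have hwlazy : IsLazyWalkSeq G (2 * t') (fun j => v (f j)) := by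
      intro p hp
      simp only
      rcases lt_trichotomy (p + 1) i with h1 | h1 | h1
      · rw [show f p = p by simp only [hf]; split_ifs <;> omega,
            show f (p + 1) = p + 1 by simp only [hf]; split_ifs <;> omega]
        exact hlazy p (by omega)
      · -- p + 1 = i, jump over the deleted position i
        rw [show f p = p by simp only [hf]; split_ifs <;> omega,
            show f (p + 1) = p + 2 by simp only [hf]; split_ifs <;> omega]
        have h2 := hlazy p (by omega)
        rwa [show v (p + 1) = v (p + 2) by
          rw [show p + 2 = i + 1 by omega, show p + 1 = i by omega]; exact hvi] at h2
      · rcases lt_trichotomy (p + 1) (t' + i) with h2 | h2 | h2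
        · rw [show f p = p + 1 by simp only [hf]; split_ifs <;> omega,
              show f (p + 1) = p + 2 by simp only [hf]; split_ifs <;> omega]
          exact hlazy (p + 1) (by omega)
        · -- p + 1 = t' + i, jump over the deleted position t + i
          rw [show f p = p + 1 by simp only [hf]; split_ifs <;> omega,
              show f (p + 1) = p + 3 by simp only [hf]; split_ifs <;> omega]
          have h3 := hlazy (p + 1) (by omega)
          rwa [show v (p + 2) = v (p + 3) by
            rw [show p + 2 = t + i by omega, show p + 3 = t + i + 1 by omega]
            exact hvti] at h3
        · rw [show f p = p + 2 by simp only [hf]; split_ifs <;> omega,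
              show f (p + 1) = p + 3 by simp only [hf]; split_ifs <;> omega]
          exact hlazy (p + 2) (by omega)
    have hwcol : ∀ j < t', φ (v (f j)) = φ (v (f (t' + j))) := by
      intro j hj
      rw [hft j hj]
      exact hcol (f j) (hflt j hj)
    have hboring := IH t' (by omega) ht'pos (fun j => v (f j)) hwlazy hwcol
    have hbv : ∀ j, j < t' → v (f j) = v (t + f j) := by
      intro j hj
      have := hboring j hj
      rwa [hft j hj] at this
    intro j hj
    rcases lt_trichotomy j i with hji | hji | hji
    · have := hbv j (by omega)
      rwa [show f j = j by simp only [hf]; split_ifs <;> omega] at this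
    · subst hji
      have := hbv j (by omega)
      rw [show f j = j + 1 by simp only [hf]; split_ifs <;> omega] at this
      rw [hvi, hvti]
      exact this
    · have := hbv (j - 1) (by omega)
      rwa [show f (j - 1) = j by simp only [hf]; split_ifs <;> omega] at this
  · -- Case: no stays in the first half
    push_neg at hstay
    have hedge1 : ∀ j, j + 1 < t → G.Adj (v j) (v (j + 1)) := by
      intro j hj
      exact (hlazy j (by omega)).resolve_left (hstay j hj)
    have hedge2 : ∀ j, j + 1 < t → G.Adj (v (t + j)) (v (t + j + 1)) := by
      intro j hj
      rcases hlazy (t + j) (by omega) with heq | hadj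
      · exfalso
        apply hstay j hj
        rcases hlazy j (by omega) with h' | h'
        · exact h'
        · exfalso
          apply hproper _ _ h'
          calc φ (v j) = φ (v (t + j)) := hcol j (by omega)
            _ = φ (v (t + j + 1)) := by rw [heq]
            _ = φ (v (t + (j + 1))) := by rw [show t + (j + 1) = t + j + 1 by omega]
            _ = φ (v (j + 1)) := (hcol (j + 1) (by omega)).symm
      · exact hadj
    rcases (show t - 1 + 1 < 2 * t by omega) |> hlazy (t - 1) with hmid | hmid
    · -- middle stay: v (t-1) = v t
      rw [show t - 1 + 1 = t by omega] at hmid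
      by_cases ht1 : t = 1
      · subst ht1
        intro i hi
        have : i = 0 := by omega
        subst this
        simpa using hmid
      · have ht2 : 2 ≤ t := by omega
        set t' := t - 1 with ht'
        have ht'pos : 0 < t' := by omega
        set u : ℕ → V := fun j => if j < t then v j else v (j + 1) with hu
        have hustep : ∀ p, p + 2 < 2 * t → G.Adj (u p) (u (p + 1)) := by
          intro p hp
          rcases lt_trichotomy (p + 1) t with h1 | h1 | h1
          · rw [show u p = v p by simp only [hu]; rw [if_pos (by omega)],
                show u (p + 1) = v (p + 1) by simp only [hu]; rw [if_pos (by omega)]]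
            exact hedge1 p h1
          · rw [show u p = v t by
                  simp only [hu]; rw [if_pos (by omega), show p = t - 1 by omega]; exact hmid,
                show u (p + 1) = v (t + 1) by
                  simp only [hu]; rw [if_neg (by omega), show p + 1 + 1 = t + 1 by omega]]
            have := hedge2 0 (by omega)
            simpa using this
          · rw [show u p = v (p + 1) by simp only [hu]; rw [if_neg (by omega)],
                show u (p + 1) = v (p + 2) by simp only [hu]; rw [if_neg (by omega)]]
            have := hedge2 (p + 1 - t) (by omega)
            rwa [show t + (p + 1 - t) = p + 1 by omega,
                 show p + 1 + 1 = p + 2 by omega] at this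
        have hw1 : IsWalkSeq G (2 * t') u := by
          intro p hp
          exact hustep p (by omega)
        have hw2 : IsWalkSeq G (2 * t') (fun j => u (j + 1)) := by
          intro p hp
          simp only
          exact hustep (p + 1) (by omega)
        have hc1 : ∀ j < t', φ (u j) = φ (u (t' + j)) := by
          intro j hj
          rcases Nat.eq_zero_or_pos j with rfl | hjpos
          · rw [show u 0 = v 0 by simp only [hu]; rw [if_pos (by omega)],
                show u (t' + 0) = v t by
                  simp only [hu]; rw [if_pos (by omega), show t' + 0 = t - 1 by omega]
                  exact hmid]
            have := hcol 0 (by omega)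
            rwa [show t + 0 = t by omega] at this
          · rw [show u j = v j by simp only [hu]; rw [if_pos (by omega)],
                show u (t' + j) = v (t + j) by
                  simp only [hu]; rw [if_neg (by omega), show t' + j + 1 = t + j by omega]]
            exact hcol j (by omega)
        have hc2 : ∀ j < t', φ (u (j + 1)) = φ (u (t' + j + 1)) := by
          intro j hj
          rw [show u (j + 1) = v (j + 1) by simp only [hu]; rw [if_pos (by omega)],
              show u (t' + j + 1) = v (t + j + 1) by
                simp only [hu]; rw [if_neg (by omega), show t' + j + 1 + 1 = t + j + 1 by omega]]
          have := hcol (j + 1) (by omega)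
          rwa [show t + (j + 1) = t + j + 1 by omega] at this
        have hb1 := h t' ht'pos u hw1 hc1
        have hb2 := h t' ht'pos (fun j => u (j + 1)) hw2 hc2
        intro j hj
        rcases lt_trichotomy j t' with hjt | hjt | hjt
        · rcases Nat.eq_zero_or_pos j with rfl | hjpos
          · have := hb1 0 (by omega)
            rw [show u 0 = v 0 by simp only [hu]; rw [if_pos (by omega)],
                show u (t' + 0) = v t by
                  simp only [hu]; rw [if_pos (by omega), show t' + 0 = t - 1 by omega]
                  exact hmid] at this
            rwa [show t + 0 = t by omega]
          · have := hb1 j (by omega)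
            rwa [show u j = v j by simp only [hu]; rw [if_pos (by omega)],
                show u (t' + j) = v (t + j) by
                  simp only [hu]; rw [if_neg (by omega), show t' + j + 1 = t + j by omega]]
              at this
        · subst hjt
          have := hb2 (t' - 1) (by omega)
          rw [show t' - 1 + 1 = t' by omega,
              show t' + (t' - 1) + 1 = 2 * t' by omega] at this
          rw [show u t' = v t' by simp only [hu]; rw [if_pos (by omega)],
              show u (2 * t') = v (t + t') by
                simp only [hu]; rw [if_neg (by omega), show 2 * t' + 1 = t + t' by omega]]
            at this
          exact this
        · omega
    · -- middle edge: v is a genuine walk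
      rw [show t - 1 + 1 = t by omega] at hmid
      have hw : IsWalkSeq G (2 * t) v := by
        intro p hp
        rcases lt_trichotomy (p + 1) t with h1 | h1 | h1
        · exact hedge1 p h1
        · rw [show p = t - 1 by omega, show t - 1 + 1 = t by omega]
          exact hmid
        · have := hedge2 (p - t) (by omega)
          rwa [show t + (p - t) = p by omega] at this
      exact h t ht v hw hcol
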